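/- arXiv:math/0501180 — 3 statements merged into one kernel-verified Lean document; each statement's English description precedes it below -/
import Mathlib

section
/- If a pure difference binomial h is reduced by one step modulo a set of pure difference binomials (i.e., a term t of h divisible by the leading monomial of some binomial q in the set is replaced via h - q·(t/lm(q))), the result is again a pure difference binomial, a difference of a monomial with itself (hence zero after cancellation), or zero. -/
open MvPolynomial

/-- One reduction step of a pure difference binomial `h = x^a - x^b` by a pure
difference binomial `q = x^c - x^d` with leading monomial `x^c` (subtracting
`(t / lm q) · q` where `t` is a term of `h` divisible by `x^c`) yields again a
pure difference binomial, a difference of a monomial with itself, or zero. -/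
theorem binomial_reduction_step
    {K : Type*} [Field K] {n : ℕ} (a b c d : Fin n →₀ ℕ)
    (hab : a ≠ b) (hcd : c ≠ d)
    (r : MvPolynomial (Fin n) K)
    (hr : (c ≤ a ∧ r = (monomial a (1 : K) - monomial b 1)
              - monomial (a - c) (1 : K) * (monomial c 1 - monomial d 1)) ∨
          (c ≤ b ∧ r = (monomial a (1 : K) - monomial b 1)
              + monomial (b - c) (1 : K) * (monomial c 1 - monomial d 1))) :
    (∃ e f : Fin n →₀ ℕ, e ≠ f ∧ r = monomial e (1 : K) - monomial f 1) ∨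
      (∃ e : Fin n →₀ ℕ, r = monomial e (1 : K) - monomial e 1) ∨ r = 0 := by
  rcases hr with ⟨hca, hr⟩ | ⟨hcb, hr⟩
  · have hr' : r = monomial (a - c + d) (1 : K) - monomial b 1 := by
      rw [hr, mul_sub, monomial_mul, monomial_mul,
        tsub_add_cancel_of_le hca, one_mul]
      ring
    by_cases h : a - c + d = b
    · right; left
      exact ⟨b, by rw [hr', h]⟩
    · left
      exact ⟨a - c + d, b, h, hr'⟩
  · have hr' : r = monomial a (1 : K) - monomial (b - c + d) 1 := by
      rw [hr, mul_sub, monomial_mul, monomial_mul,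
        tsub_add_cancel_of_le hcb, one_mul]
      ring
    by_cases h : a = b - c + d
    · right; left
      exact ⟨a, by rw [hr', h]⟩
    · left
      exact ⟨a, b - c + d, h, hr'⟩
end

section
/- In a finite set U of pairwise distinct monomials, every monomial w has at most one Janet divisor in U. That is, if u, v ∈ U, u |_J w and v |_J w (Janet division with respect to U), then u = v. -/
/-- `x_i` is Janet multiplicative for `u` with respect to the finite monomial set `U`
(monomials are identified with their exponent vectors, `x_1 ≻ x_2 ≻ … ≻ x_n`):
`deg_i u` equals the maximum of `deg_i v` over all `v ∈ U` agreeing with `u`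
in all degrees `deg_j` for `j < i`. -/
def JanetMult {n : ℕ} (U : Finset (Fin n → ℕ)) (u : Fin n → ℕ) (i : Fin n) : Prop :=
  u i = (U.filter (fun v => ∀ j, j < i → v j = u j)).sup (fun v => v i)

/-- `u` is a Janet divisor of `w` with respect to `U`: `u ∣ w` and every variable
occurring in `w/u` is Janet multiplicative for `u`. -/
def JanetDiv {n : ℕ} (U : Finset (Fin n → ℕ)) (u w : Fin n → ℕ) : Prop :=
  (∀ i, u i ≤ w i) ∧ ∀ i, u i < w i → JanetMult U u i

private lemma janet_aux {n : ℕ} (U : Finset (Fin n → ℕ)) (u v w : Fin n → ℕ)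
    (hv : v ∈ U) (hu_div : JanetDiv U u w) (hv_div : JanetDiv U v w) (i : Fin n)
    (hagree : ∀ j, j < i → u j = v j) (hlt : u i < v i) : False := by
  classical
  have hwi : u i < w i := lt_of_lt_of_le hlt (hv_div.1 i)
  have hm := hu_div.2 i hwi
  have hvmem : v ∈ U.filter (fun x => ∀ j, j < i → x j = u j) :=
    Finset.mem_filter.2 ⟨hv, fun j hj => (hagree j hj).symm⟩
  have hle : v i ≤ (U.filter (fun x => ∀ j, j < i → x j = u j)).sup (fun x => x i) :=
    Finset.le_sup (f := fun x => x i) hvmem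
  rw [← hm] at hle
  omega

/-- Uniqueness of Janet divisors: a monomial `w` has at most one Janet divisor
in a finite set `U` of pairwise distinct monomials. -/
theorem janetDiv_unique {n : ℕ} (U : Finset (Fin n → ℕ)) (u v w : Fin n → ℕ)
    (hu : u ∈ U) (hv : v ∈ U) (hu_div : JanetDiv U u w) (hv_div : JanetDiv U v w) :
    u = v := by
  classical
  by_contra hne
  have hS : (Finset.univ.filter (fun i => u i ≠ v i)).Nonempty := by
    by_contra h
    rw [Finset.not_nonempty_iff_eq_empty, Finset.filter_eq_empty_iff] at h
    exact hne (funext fun i => not_not.1 (h (Finset.mem_univ i)))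
  set i := (Finset.univ.filter (fun i => u i ≠ v i)).min' hS with hidef
  have hi : u i ≠ v i :=
    (Finset.mem_filter.1 ((Finset.univ.filter (fun i => u i ≠ v i)).min'_mem hS)).2
  have hagree : ∀ j, j < i → u j = v j := fun j hj => by
    by_contra hj'
    exact absurd (Finset.min'_le _ j (Finset.mem_filter.2 ⟨Finset.mem_univ j, hj'⟩))
      (not_le.2 hj)
  rcases hi.lt_or_gt with h | h
  · exact janet_aux U u v w hv hu_div hv_div i hagree h
  · exact janet_aux U v u w hu hv_div hu_div i (fun j hj => (hagree j hj).symm) h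
end

section
/- Let c ∈ N^n and let ≻_c be an admissible monomial ordering compatible with c (i.e., x^a ≻_c x^b whenever c·a > c·b, ties broken by a fixed admissible order). Let G be a Gröbner basis of the toric ideal I_A with respect to ≻_c, and let x₀ ∈ N^n with A·x₀ = b. If x^{x*} is the normal form of x^{x₀} modulo G, then A·x* = b and c·x* ≤ c·x₀. -/
open MvPolynomial
open scoped MonomialOrder

/-- The positive part `u⁺ ∈ ℕ^n` of `u ∈ ℤ^n`. -/
noncomputable def posPart {n : ℕ} (u : Fin n → ℤ) : Fin n →₀ ℕ :=
  Finsupp.equivFunOnFinite.symm (fun i => (u i).toNat)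

/-- The negative part `u⁻ ∈ ℕ^n` of `u ∈ ℤ^n`. -/
noncomputable def negPart {n : ℕ} (u : Fin n → ℤ) : Fin n →₀ ℕ :=
  posPart (-u)

/-- The leading exponent of a polynomial with respect to a monomial order. -/
noncomputable def lmExp {K : Type*} [Field K] {n : ℕ} (M : MonomialOrder (Fin n))
    (p : MvPolynomial (Fin n) K) : Fin n →₀ ℕ :=
  M.toSyn.symm (p.support.sup M.toSyn)

/-- One reduction step of a monomial modulo a set `G` of binomials
`x^{p.1} - x^{p.2}` (leading exponent `p.1`): divide out `x^{p.1}` and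
multiply by `x^{p.2}`. -/
def RedStep {n : ℕ} (G : Set ((Fin n →₀ ℕ) × (Fin n →₀ ℕ))) (a a' : Fin n →₀ ℕ) : Prop :=
  ∃ p ∈ G, p.1 ≤ a ∧ a' = a - p.1 + p.2

/-- Integer programming via Gröbner bases of toric ideals: if `G` is a Gröbner
basis of the toric ideal `I_A` with respect to an order compatible with the cost
vector `c`, and `x^{x*}` is the normal form of `x^{x₀}` modulo `G` where
`A·x₀ = b`, then `A·x* = b` and `c·x* ≤ c·x₀`. -/
theorem toric_groebner_normal_form_solves_ip
    {K : Type*} [Field K] {m n : ℕ} (A : Matrix (Fin m) (Fin n) ℤ) (b : Fin m → ℤ)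
    (c : Fin n → ℕ) (M : MonomialOrder (Fin n))
    (hcompat : ∀ a a' : Fin n →₀ ℕ, (∑ i, c i * a' i) < (∑ i, c i * a i) → a' ≺[M] a)
    (IA : Ideal (MvPolynomial (Fin n) K))
    (hIA : IA = Ideal.span {p : MvPolynomial (Fin n) K |
      ∃ u : Fin n → ℤ, A.mulVec u = 0 ∧
        p = monomial (posPart u) (1 : K) - monomial (negPart u) 1})
    (hmemIff : ∀ a a' : Fin n →₀ ℕ,
      ((monomial a (1 : K) - monomial a' 1) ∈ IA ↔
        A.mulVec (fun i => (a i : ℤ)) = A.mulVec (fun i => (a' i : ℤ))))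
    (G : Set ((Fin n →₀ ℕ) × (Fin n →₀ ℕ)))
    (hGI : ∀ p ∈ G, (monomial p.1 (1 : K) - monomial p.2 1) ∈ IA)
    (hGlead : ∀ p ∈ G, p.2 ≺[M] p.1)
    (hGspan : Ideal.span {q : MvPolynomial (Fin n) K |
        ∃ p ∈ G, q = monomial p.1 (1 : K) - monomial p.2 1} = IA)
    (hGroebner : ∀ f ∈ IA, f ≠ 0 → ∃ p ∈ G, p.1 ≤ lmExp M f)
    (x0 xs : Fin n →₀ ℕ)
    (hx0 : A.mulVec (fun i => (x0 i : ℤ)) = b)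
    (hred : Relation.ReflTransGen (RedStep G) x0 xs)
    (hirr : ∀ a', ¬ RedStep G xs a') :
    A.mulVec (fun i => (xs i : ℤ)) = b ∧ (∑ i, c i * xs i) ≤ ∑ i, c i * x0 i := by
  have key : ∀ a a' : Fin n →₀ ℕ, RedStep G a a' →
      A.mulVec (fun i => (a' i : ℤ)) = A.mulVec (fun i => (a i : ℤ)) ∧
      (∑ i, c i * a' i) ≤ ∑ i, c i * a i := by
    rintro a a' ⟨p, hp, hle, rfl⟩
    have hA : A.mulVec (fun i => (p.1 i : ℤ)) = A.mulVec (fun i => (p.2 i : ℤ)) :=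
      (hmemIff p.1 p.2).mp (hGI p hp)
    have hcost : (∑ i, c i * p.2 i) ≤ ∑ i, c i * p.1 i := by
      by_contra h
      push_neg at h
      exact absurd (hcompat p.2 p.1 h) (lt_asymm (hGlead p hp))
    have hval : ∀ i, (((a - p.1 + p.2) i : ℕ) : ℤ) = (a i : ℤ) - p.1 i + p.2 i := by
      intro i
      have h1 : p.1 i ≤ a i := hle i
      simp only [Finsupp.add_apply, Finsupp.tsub_apply]
      omega
    constructor
    · funext j
      simp only [Matrix.mulVec, dotProduct] at hA ⊢
      have hj := congrFun hA j
      simp only [Matrix.mulVec, dotProduct] at hj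
      calc ∑ k, A j k * (((a - p.1 + p.2) k : ℕ) : ℤ)
          = ∑ k, (A j k * (a k : ℤ) - A j k * (p.1 k : ℤ) + A j k * (p.2 k : ℤ)) := by
            refine Finset.sum_congr rfl fun k _ => ?_
            rw [hval k]; ring
        _ = ∑ k, A j k * (a k : ℤ) := by
            rw [Finset.sum_add_distrib, Finset.sum_sub_distrib, hj]; ring
    · have heq : (∑ i, c i * ((a - p.1 + p.2) i)) + ∑ i, c i * p.1 i
           = (∑ i, c i * a i) + ∑ i, c i * p.2 i := by
        rw [← Finset.sum_add_distrib, ← Finset.sum_add_distrib]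
        refine Finset.sum_congr rfl fun i _ => ?_
        have h1 : p.1 i ≤ a i := hle i
        rw [← Nat.mul_add, ← Nat.mul_add]
        congr 1
        simp only [Finsupp.add_apply, Finsupp.tsub_apply]
        omega
      omega
  clear hirr
  induction hred with
  | refl => exact ⟨hx0, le_refl _⟩
  | tail hsteps hstep ih =>
    obtain ⟨h1, h2⟩ := key _ _ hstep
    exact ⟨h1.trans ih.1, h2.trans ih.2⟩
end
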